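/- For n = 8, the 240 normalized E8 minimal vectors A ⊆ S^7 satisfy: for every x ∈ S^7 there exists a ∈ A with ⟨x, a⟩ ≥ cos(π/4) = 1/√2; equivalently, max over the 240 unit vectors a of ⟨x,a⟩ is at least 1/√2 for every unit vector x ∈ E^8. -/

import Mathlib

open RealInnerProductSpace

/-- The caps of angular radius `r` centered at points of `A` cover the unit sphere. -/
def Covers {n : ℕ} (A : Set (EuclideanSpace ℝ (Fin n))) (r : ℝ) : Prop :=
  ∀ x ∈ Metric.sphere (0 : EuclideanSpace ℝ (Fin n)) 1, ∃ a ∈ A, Real.arccos ⟪x, a⟫ ≤ r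

/-- The covering radius of `A`. -/
noncomputable def covRadius {n : ℕ} (A : Set (EuclideanSpace ℝ (Fin n))) : ℝ :=
  sInf {r : ℝ | 0 < r ∧ Covers A r}

/-- The 240 minimal (root) vectors of the `E₈` lattice: vectors with two coordinates
`±2` and the rest `0`, together with vectors with all coordinates `±1` and an even
number of minus signs. -/
def E8roots : Set (EuclideanSpace ℝ (Fin 8)) :=
  {v | (∃ i j : Fin 8, i ≠ j ∧ (v i = 2 ∨ v i = -2) ∧ (v j = 2 ∨ v j = -2) ∧
          ∀ k, k ≠ i → k ≠ j → v k = 0) ∨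
        ((∀ i, v i = 1 ∨ v i = -1) ∧ Even ({i : Fin 8 | v i = -1}.ncard))}

/-- The normalized `E₈` root system, as a subset of the unit sphere `S⁷`. -/
noncomputable def E8A : Set (EuclideanSpace ℝ (Fin 8)) :=
  (fun v => (Real.sqrt 8)⁻¹ • v) '' E8roots

lemma e8cert (a b c : ℝ) (h0 : 0 ≤ c) (h1 : c ≤ b) (h2 : b ≤ a) (h3 : a + b ≤ 1) :
    0 ≤ 1 - a^2 + a*b + a*c + 5*b*c - 2*b - 2*c - 2*c^2 := by
  nlinarith [mul_nonneg (sub_nonneg.2 h3) (sub_nonneg.2 h2),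
    mul_nonneg (sub_nonneg.2 h3) (sub_nonneg.2 h1), mul_nonneg (sub_nonneg.2 h3) h0,
    mul_nonneg (mul_nonneg (sub_nonneg.2 h3) h0) h0, mul_nonneg h0 (sub_nonneg.2 h1),
    mul_nonneg h0 (sub_nonneg.2 h2), sq_nonneg (1-a-b)]

lemma e8key (y : Fin 8 → ℝ) (hy : ∀ k, 0 ≤ y k) (hsum : ∑ k, (y k)^2 = 1)
    (i0 j0 m : Fin 8) (hne : j0 ≠ i0)
    (hi : ∀ k, y k ≤ y i0) (hj : ∀ k, k ≠ i0 → y k ≤ y j0) (hm : ∀ k, y m ≤ y k) :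
    1 ≤ y i0 + y j0 ∨ 2 ≤ (∑ k, y k) - 2 * y m := by
  by_contra hcon
  push_neg at hcon
  obtain ⟨hab, hS⟩ := hcon
  set a := y i0 with ha
  set b := y j0 with hb
  set c := y m with hc
  set S := ∑ k, y k with hSdef
  set T := (Finset.univ.erase i0).erase j0 with hT
  have hj0mem : j0 ∈ Finset.univ.erase i0 := Finset.mem_erase.2 ⟨hne, Finset.mem_univ _⟩
  have hcard : T.card = 6 := by
    rw [hT, Finset.card_erase_of_mem hj0mem, Finset.card_erase_of_mem (Finset.mem_univ _)]
    simp
  have hsumT : ∑ k ∈ T, y k = S - a - b := by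
    have h1 : ∑ k ∈ T, y k + y j0 = ∑ k ∈ Finset.univ.erase i0, y k :=
      Finset.sum_erase_add _ _ hj0mem
    have h2 : ∑ k ∈ Finset.univ.erase i0, y k + y i0 = S :=
      Finset.sum_erase_add _ _ (Finset.mem_univ _)
    linarith
  have hsumT2 : ∑ k ∈ T, (y k)^2 = 1 - a^2 - b^2 := by
    have h1 : ∑ k ∈ T, (y k)^2 + (y j0)^2 = ∑ k ∈ Finset.univ.erase i0, (y k)^2 :=
      Finset.sum_erase_add _ _ hj0mem
    have h2 : ∑ k ∈ Finset.univ.erase i0, (y k)^2 + (y i0)^2 = ∑ k, (y k)^2 :=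
      Finset.sum_erase_add _ _ (Finset.mem_univ _)
    rw [hsum] at h2
    linarith
  have H0 : (0:ℝ) ≤ ∑ k ∈ T, (b - y k) * (y k - c) := by
    apply Finset.sum_nonneg
    intro k hk
    have hk1 : k ≠ i0 := (Finset.mem_erase.1 (Finset.mem_erase.1 hk).2).1
    exact mul_nonneg (sub_nonneg.2 (hj k hk1)) (sub_nonneg.2 (hm k))
  have hexp : ∑ k ∈ T, (b - y k) * (y k - c)
      = (b+c) * (S - a - b) - 6*(b*c) - (1 - a^2 - b^2) := by
    have : ∀ k ∈ T, (b - y k) * (y k - c) = (b+c) * y k - b*c - (y k)^2 := by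
      intro k _; ring
    rw [Finset.sum_congr rfl this, Finset.sum_sub_distrib, Finset.sum_sub_distrib,
      ← Finset.mul_sum, Finset.sum_const, hcard, hsumT, hsumT2]
    ring
  have H : (1 - a^2 - b^2) + 6*(b*c) ≤ (b+c) * (S - a - b) := by
    rw [hexp] at H0; linarith
  have hc0 : 0 ≤ c := hy m
  have hcb : c ≤ b := hm j0
  have hba : b ≤ a := hi j0
  have hE : 0 ≤ 1 - a^2 + a*b + a*c + 5*b*c - 2*b - 2*c - 2*c^2 :=
    e8cert a b c hc0 hcb hba hab.le
  have hbc : (0:ℝ) ≤ b + c := by linarith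
  rcases eq_or_lt_of_le hbc with heq | hlt
  · have hb0 : b = 0 := by linarith
    have hc0' : c = 0 := by linarith
    rw [hb0, hc0'] at H
    have : 1 - a^2 ≤ 0 := by
      have : (b+c)*(S-a-b) = 0 := by rw [← heq]; ring
      linarith [H, this]
    nlinarith [hy i0, hab, hb0]
  · have h1 : S - a - b < 2 + 2*c - a - b := by linarith
    have h2 : (b+c)*(S-a-b) < (b+c)*(2+2*c-a-b) :=
      mul_lt_mul_of_pos_left h1 hlt
    nlinarith [H, h2, hE]

lemma e8final (x r : EuclideanSpace ℝ (Fin 8)) (hr : r ∈ E8roots) (h : (2:ℝ) ≤ ⟪x, r⟫) :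
    ∃ a ∈ E8A, (1 / Real.sqrt 2 : ℝ) ≤ ⟪x, a⟫ := by
  refine ⟨(Real.sqrt 8)⁻¹ • r, ⟨r, hr, rfl⟩, ?_⟩
  rw [real_inner_smul_right]
  have h8 : (1 / Real.sqrt 2 : ℝ) = (Real.sqrt 8)⁻¹ * 2 := by
    rw [show (8:ℝ) = 4 * 2 by norm_num, Real.sqrt_mul (by norm_num), show Real.sqrt 4 = 2 by
      rw [show (4:ℝ) = 2^2 by norm_num, Real.sqrt_sq (by norm_num)]]
    rw [mul_inv]; ring
  rw [h8]
  exact mul_le_mul_of_nonneg_left h (inv_nonneg.2 (Real.sqrt_nonneg _))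

lemma mul_sign2 (t : ℝ) : t * (if t < 0 then (-2:ℝ) else 2) = 2 * |t| := by
  split_ifs with h
  · rw [abs_of_neg h]; ring
  · rw [abs_of_nonneg (not_lt.1 h)]; ring

lemma mul_sign1 (t : ℝ) : t * (if t < 0 then (-1:ℝ) else 1) = |t| := by
  split_ifs with h
  · rw [abs_of_neg h]; ring
  · rw [abs_of_nonneg (not_lt.1 h)]; ring

lemma mul_sign1' (t : ℝ) : t * (if t < 0 then (1:ℝ) else -1) = -|t| := by
  split_ifs with h
  · rw [abs_of_neg h]; ring
  · rw [abs_of_nonneg (not_lt.1 h)]; ring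

lemma e8root1 (x : EuclideanSpace ℝ (Fin 8)) (i0 j0 : Fin 8) (hne : i0 ≠ j0) :
    ∃ r ∈ E8roots, ⟪x, r⟫ = 2 * (|x i0| + |x j0|) := by
  set v : EuclideanSpace ℝ (Fin 8) := WithLp.toLp 2 (fun k =>
    if k = i0 then (if x i0 < 0 then (-2:ℝ) else 2)
    else if k = j0 then (if x j0 < 0 then (-2:ℝ) else 2) else 0) with hv
  have hvi : v i0 = (if x i0 < 0 then (-2:ℝ) else 2) := by simp [hv]
  have hvj : v j0 = (if x j0 < 0 then (-2:ℝ) else 2) := by simp [hv, hne.symm]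
  refine ⟨v, Or.inl ⟨i0, j0, hne, ?_, ?_, ?_⟩, ?_⟩
  · rw [hvi]; split_ifs <;> simp
  · rw [hvj]; split_ifs <;> simp
  · intro k hk1 hk2; simp [hv, hk1, hk2]
  · simp only [PiLp.inner_apply, RCLike.inner_apply', conj_trivial]
    have hzero : ∀ k ∈ Finset.univ, k ∉ ({i0, j0} : Finset (Fin 8)) → x k * v k = 0 := by
      intro k _ hk
      simp only [Finset.mem_insert, Finset.mem_singleton, not_or] at hk
      simp [hv, hk.1, hk.2]
    rw [← Finset.sum_subset (Finset.subset_univ _) hzero, Finset.sum_pair hne, hvi, hvj,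
      mul_sign2, mul_sign2]
    ring

lemma e8root2 (x : EuclideanSpace ℝ (Fin 8)) (m : Fin 8) :
    ∃ r ∈ E8roots, (∑ k, |x k|) - 2 * |x m| ≤ ⟪x, r⟫ := by
  set N := Finset.univ.filter (fun k => x k < 0) with hN
  by_cases hpar : Even N.card
  · -- no flip needed
    set w : EuclideanSpace ℝ (Fin 8) := WithLp.toLp 2 (fun k => if x k < 0 then (-1:ℝ) else 1) with hw
    refine ⟨w, Or.inr ⟨?_, ?_⟩, ?_⟩
    · intro i; simp only [hw]; split_ifs <;> simp
    · have hset : {i : Fin 8 | w i = -1} = ↑N := by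
        ext i
        simp only [hw, hN, Set.mem_setOf_eq, Finset.coe_filter, Finset.mem_univ, true_and]
        split_ifs with h <;> simp [hN, h] <;> norm_num
      rw [hset, Set.ncard_coe_finset]; exact hpar
    · have : ⟪x, w⟫ = ∑ k, |x k| := by
        simp only [PiLp.inner_apply, RCLike.inner_apply', conj_trivial]
        exact Finset.sum_congr rfl fun k _ => mul_sign1 (x k)
      rw [this]
      have : (0:ℝ) ≤ |x m| := abs_nonneg _
      linarith
  · -- flip the sign at m
    set w : EuclideanSpace ℝ (Fin 8) := WithLp.toLp 2 (fun k =>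
      if k = m then (if x m < 0 then (1:ℝ) else -1) else if x k < 0 then (-1:ℝ) else 1) with hw
    have hwm : w m = (if x m < 0 then (1:ℝ) else -1) := by simp [hw]
    have hwk : ∀ k, k ≠ m → w k = (if x k < 0 then (-1:ℝ) else 1) := by
      intro k hk; simp [hw, hk]
    refine ⟨w, Or.inr ⟨?_, ?_⟩, ?_⟩
    · intro i
      by_cases hi : i = m
      · subst hi; rw [hwm]; split_ifs <;> simp
      · rw [hwk i hi]; split_ifs <;> simp
    · have hodd : Odd N.card := Nat.not_even_iff_odd.1 hpar
      by_cases hm : x m < 0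
      · have hset : {i : Fin 8 | w i = -1} = ↑(N.erase m) := by
          ext i
          simp only [Set.mem_setOf_eq, Finset.coe_erase, Set.mem_diff, Finset.coe_filter,
            Finset.mem_univ, true_and, Set.mem_setOf_eq, Set.mem_singleton_iff]
          by_cases hi : i = m
          · subst hi; rw [hwm, if_pos hm]; norm_num
          · rw [hwk i hi]
            split_ifs with h <;> simp [hN, h, hi] <;> norm_num
        rw [hset, Set.ncard_coe_finset, Finset.card_erase_of_mem (by simp [hN, hm])]
        exact Nat.Odd.sub_odd hodd odd_one
      · have hset : {i : Fin 8 | w i = -1} = ↑(insert m N) := by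
          ext i
          simp only [Set.mem_setOf_eq, Finset.coe_insert, Set.mem_insert_iff,
            Finset.coe_filter, Finset.mem_univ, true_and, Set.mem_setOf_eq]
          by_cases hi : i = m
          · subst hi; rw [hwm, if_neg hm]; simp
          · rw [hwk i hi]
            split_ifs with h <;> simp [hN, h, hi] <;> norm_num
        rw [hset, Set.ncard_coe_finset, Finset.card_insert_of_notMem (by simp [hN, hm])]
        exact Nat.even_add_one.2 hpar
    · have hinner : ⟪x, w⟫ = (∑ k, |x k|) - 2 * |x m| := by
        simp only [PiLp.inner_apply, RCLike.inner_apply', conj_trivial]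
        have h1 : ∑ k ∈ Finset.univ.erase m, x k * w k + x m * w m = ∑ k, x k * w k :=
          Finset.sum_erase_add _ _ (Finset.mem_univ m)
        have h2 : ∑ k ∈ Finset.univ.erase m, |x k| + |x m| = ∑ k, |x k| :=
          Finset.sum_erase_add _ _ (Finset.mem_univ m)
        have h3 : ∑ k ∈ Finset.univ.erase m, x k * w k
            = ∑ k ∈ Finset.univ.erase m, |x k| := by
          refine Finset.sum_congr rfl fun k hk => ?_
          rw [hwk k (Finset.mem_erase.1 hk).1]
          exact mul_sign1 (x k)
        have h4 : x m * w m = -|x m| := by rw [hwm]; exact mul_sign1' (x m)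
        rw [← h1, h3, h4]
        linarith
      rw [hinner]

theorem e8_caps_cover :
    ∀ x ∈ Metric.sphere (0 : EuclideanSpace ℝ (Fin 8)) 1,
      ∃ a ∈ E8A, (1 / Real.sqrt 2 : ℝ) ≤ ⟪x, a⟫ := by
  intro x hx
  have hx1 : ‖x‖ = 1 := mem_sphere_zero_iff_norm.1 hx
  have hsum : ∑ i, |x i|^2 = 1 := by
    rw [EuclideanSpace.norm_eq] at hx1
    have := Real.sqrt_eq_one.mp hx1
    simpa using this
  set y : Fin 8 → ℝ := fun i => |x i| with hy
  obtain ⟨i0, -, hi0⟩ := Finset.exists_max_image Finset.univ y ⟨0, Finset.mem_univ 0⟩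
  have hnerase : (Finset.univ.erase i0).Nonempty := by
    rw [← Finset.card_pos, Finset.card_erase_of_mem (Finset.mem_univ _)]
    simp
  obtain ⟨j0, hj0mem, hj0⟩ := Finset.exists_max_image (Finset.univ.erase i0) y hnerase
  obtain ⟨m, -, hm⟩ := Finset.exists_min_image Finset.univ y ⟨0, Finset.mem_univ 0⟩
  have hne : j0 ≠ i0 := (Finset.mem_erase.1 hj0mem).1
  rcases e8key y (fun k => abs_nonneg _) hsum i0 j0 m hne
      (fun k => hi0 k (Finset.mem_univ k))
      (fun k hk => hj0 k (Finset.mem_erase.2 ⟨hk, Finset.mem_univ k⟩))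
      (fun k => hm k (Finset.mem_univ k)) with hcase | hcase
  · obtain ⟨r, hr, hir⟩ := e8root1 x i0 j0 hne.symm
    refine e8final x r hr ?_
    rw [hir]
    have : y i0 + y j0 = |x i0| + |x j0| := rfl
    linarith [hcase]
  · obtain ⟨r, hr, hir⟩ := e8root2 x m
    refine e8final x r hr ?_
    have h1 : (∑ k, y k) - 2 * y m = (∑ k, |x k|) - 2 * |x m| := rfl
    linarith [hcase, hir]
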